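/- Let V be a polynomial in ℂ⟨X_1,…,X_m⟩ and define Ξ̄₁(P) = Σ_{k=1}^m ∂_k P ♯ D_k V. Then for every P in ℂ₀⟨X_1,…,X_m⟩ and every l, D_l Ξ̄₁(ΣP) = Ξ̄₁(D_l ΣP) + Σ_{i=1}^m ∂_i D_l V ♯ D_i ΣP. (Here Ξ₁ in the paper is Ξ̄₁ ∘ Σ.) -/

import Mathlib

/-- Words in `m` noncommuting letters: monomials of the free algebra `ℂ⟨X_1,…,X_m⟩`. -/
abbrev Word (m : ℕ) := List (Fin m)

/-- Noncommutative polynomials: finitely supported complex combinations of words. -/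
abbrev NCPoly (m : ℕ) := Word m →₀ ℂ

/-- The tensor square, as combinations of pairs of words. -/
abbrev NCPoly₂ (m : ℕ) := (Word m × Word m) →₀ ℂ

/-- Noncommutative derivative of a monomial: `∂_k w = Σ_{w = r X_k s} r ⊗ s`. -/
noncomputable def derW {m : ℕ} (k : Fin m) (w : Word m) : NCPoly₂ m :=
  ∑ i : Fin w.length,
    if w.get i = k then Finsupp.single (w.take i.1, w.drop (i.1 + 1)) 1 else 0

/-- Noncommutative derivative `∂_k`, extended linearly. -/
noncomputable def der {m : ℕ} (k : Fin m) : NCPoly m →ₗ[ℂ] NCPoly₂ m :=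
  Finsupp.lsum ℂ fun w => LinearMap.toSpanSingleton ℂ _ (derW k w)

/-- Cyclic derivative of a monomial: `D_k w = Σ_{w = r X_k s} s r`. -/
noncomputable def cderW {m : ℕ} (k : Fin m) (w : Word m) : NCPoly m :=
  ∑ i : Fin w.length,
    if w.get i = k then Finsupp.single (w.drop (i.1 + 1) ++ w.take i.1) 1 else 0

/-- Cyclic derivative `D_k`, extended linearly. -/
noncomputable def cder {m : ℕ} (k : Fin m) : NCPoly m →ₗ[ℂ] NCPoly m :=
  Finsupp.lsum ℂ fun w => LinearMap.toSpanSingleton ℂ _ (cderW k w)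

/-- The map `Σ` dividing each monomial by its degree (and killing constants). -/
noncomputable def sig {m : ℕ} : NCPoly m →ₗ[ℂ] NCPoly m :=
  Finsupp.lsum ℂ fun w => LinearMap.toSpanSingleton ℂ _
    (if w.length = 0 then 0 else ((w.length : ℂ)⁻¹) • Finsupp.single w 1)

/-- The operation `(A ⊗ B) ♯ C = A C B`, extended bilinearly. -/
noncomputable def sharp {m : ℕ} (T : NCPoly₂ m) (P : NCPoly m) : NCPoly m :=
  T.sum fun rs c => P.sum fun u d => Finsupp.single (rs.1 ++ u ++ rs.2) (c * d)

/-- The operator `Ξ̄₁(P) = Σ_{k=1}^m ∂_k P ♯ D_k V`. -/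
noncomputable def Xi1bar {m : ℕ} (V : NCPoly m) (P : NCPoly m) : NCPoly m :=
  ∑ k : Fin m, sharp (der k P) (cder k V)

section aux
open Finsupp
variable {m : ℕ}

lemma der_single (k : Fin m) (w : Word m) (c : ℂ) :
    der k (Finsupp.single w c) = c • derW k w := by
  simp [der, Finsupp.lsum_single, LinearMap.toSpanSingleton_apply]

lemma cder_single (k : Fin m) (w : Word m) (c : ℂ) :
    cder k (Finsupp.single w c) = c • cderW k w := by
  simp [cder, Finsupp.lsum_single, LinearMap.toSpanSingleton_apply]

lemma sharp_eq (T : NCPoly₂ m) (P : NCPoly m) :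
    sharp T P = T.sum fun rs c => c • Finsupp.mapDomain (fun u => rs.1 ++ u ++ rs.2) P := by
  unfold sharp
  refine Finset.sum_congr rfl fun rs _ => ?_
  dsimp only
  rw [Finsupp.mapDomain, Finsupp.smul_sum]
  refine Finset.sum_congr rfl fun u _ => ?_
  dsimp only
  rw [Finsupp.smul_single']

lemma sharp_zero_left (P : NCPoly m) : sharp (0 : NCPoly₂ m) P = 0 := by
  simp [sharp]

lemma sharp_zero_right (T : NCPoly₂ m) : sharp T (0 : NCPoly m) = 0 := by
  simp [sharp]

lemma sharp_single_left (r s : Word m) (c : ℂ) (P : NCPoly m) :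
    sharp (Finsupp.single (r, s) c) P = c • Finsupp.mapDomain (fun u => r ++ u ++ s) P := by
  rw [sharp_eq, Finsupp.sum_single_index]
  simp

lemma sharp_add_left (T₁ T₂ : NCPoly₂ m) (P : NCPoly m) :
    sharp (T₁ + T₂) P = sharp T₁ P + sharp T₂ P := by
  rw [sharp_eq, sharp_eq, sharp_eq]
  exact Finsupp.sum_add_index' (fun a => by simp) (fun a b₁ b₂ => add_smul _ _ _)

lemma sharp_smul_left (a : ℂ) (T : NCPoly₂ m) (P : NCPoly m) :
    sharp (a • T) P = a • sharp T P := by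
  rw [sharp_eq, sharp_eq, Finsupp.sum_smul_index (fun i => by simp), Finsupp.smul_sum]
  simp [mul_smul]

lemma sharp_sum_left {ι : Type*} (s : Finset ι) (T : ι → NCPoly₂ m) (P : NCPoly m) :
    sharp (∑ i ∈ s, T i) P = ∑ i ∈ s, sharp (T i) P := by
  classical
  induction s using Finset.induction_on with
  | empty => simp [sharp_zero_left]
  | insert _ _ h ih => rw [Finset.sum_insert h, Finset.sum_insert h, sharp_add_left, ih]

lemma sharp_add_right (T : NCPoly₂ m) (P₁ P₂ : NCPoly m) :
    sharp T (P₁ + P₂) = sharp T P₁ + sharp T P₂ := by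
  rw [sharp_eq, sharp_eq, sharp_eq, ← Finsupp.sum_add]
  refine Finset.sum_congr rfl fun rs _ => ?_
  dsimp only
  rw [Finsupp.mapDomain_add, smul_add]

lemma sharp_smul_right (a : ℂ) (T : NCPoly₂ m) (P : NCPoly m) :
    sharp T (a • P) = a • sharp T P := by
  rw [sharp_eq, sharp_eq, Finsupp.smul_sum]
  refine Finset.sum_congr rfl fun rs _ => ?_
  dsimp only
  rw [Finsupp.mapDomain_smul, smul_comm]

lemma sharp_single_right (T : NCPoly₂ m) (x : Word m) :
    sharp T (Finsupp.single x 1) = Finsupp.mapDomain (fun q : Word m × Word m => q.1 ++ x ++ q.2) T := by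
  unfold sharp
  rw [Finsupp.mapDomain]
  refine Finset.sum_congr rfl fun rs _ => ?_
  dsimp only
  rw [Finsupp.sum_single_index (by simp)]
  simp

lemma sharp_ite_left (c : Prop) [Decidable c] (T : NCPoly₂ m) (P : NCPoly m) :
    sharp (if c then T else 0) P = if c then sharp T P else 0 := by
  split <;> simp [sharp_zero_left]

end aux

section aux2
open Finsupp
variable {m : ℕ}

lemma derW_nil (k : Fin m) : derW k ([] : Word m) = 0 := by
  simp [derW]

lemma derW_cons (k x : Fin m) (u : Word m) :
    derW k (x :: u) = (if x = k then Finsupp.single (([] : Word m), u) 1 else 0)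
      + Finsupp.mapDomain (fun q : Word m × Word m => (x :: q.1, q.2)) (derW k u) := by
  have h : derW k (x :: u) = (if (x :: u).get ⟨0, Nat.succ_pos _⟩ = k then Finsupp.single (((x :: u).take 0 : Word m), (x :: u).drop 1) 1 else 0)
      + ∑ i : Fin u.length, (if (x :: u).get i.succ = k then Finsupp.single ((x :: u).take (i.1 + 1), (x :: u).drop (i.1 + 1 + 1)) 1 else 0) :=
    Fin.sum_univ_succ _
  rw [h]
  congr 1
  conv_rhs => rw [derW]
  rw [Finsupp.mapDomain_finset_sum]
  refine Finset.sum_congr rfl fun i _ => ?_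
  rw [apply_ite (Finsupp.mapDomain fun q : Word m × Word m => (x :: q.1, q.2)),
    Finsupp.mapDomain_single, Finsupp.mapDomain_zero]
  rfl

lemma derW_append (k : Fin m) (a b : Word m) :
    derW k (a ++ b) = Finsupp.mapDomain (fun q : Word m × Word m => (q.1, q.2 ++ b)) (derW k a)
      + Finsupp.mapDomain (fun q : Word m × Word m => (a ++ q.1, q.2)) (derW k b) := by
  induction a with
  | nil =>
    rw [derW_nil, Finsupp.mapDomain_zero, List.nil_append, zero_add]
    rw [show (fun q : Word m × Word m => (([] : Word m) ++ q.1, q.2)) = id from rfl,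
      Finsupp.mapDomain_id]
  | cons x a ih =>
    rw [List.cons_append, derW_cons, derW_cons, ih, Finsupp.mapDomain_add,
      Finsupp.mapDomain_add, ← Finsupp.mapDomain_comp, ← Finsupp.mapDomain_comp,
      ← Finsupp.mapDomain_comp]
    rw [apply_ite (Finsupp.mapDomain fun q : Word m × Word m => (q.1, q.2 ++ b)),
      Finsupp.mapDomain_single, Finsupp.mapDomain_zero]
    rw [show ((fun q : Word m × Word m => (q.1, q.2 ++ b)) ∘ (fun q : Word m × Word m => (x :: q.1, q.2)))
        = ((fun q : Word m × Word m => (x :: q.1, q.2)) ∘ (fun q : Word m × Word m => (q.1, q.2 ++ b))) from rfl]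
    rw [show ((fun q : Word m × Word m => (x :: q.1, q.2)) ∘ (fun q : Word m × Word m => (a ++ q.1, q.2)))
        = (fun q : Word m × Word m => ((x :: a) ++ q.1, q.2)) from rfl]
    rw [Finsupp.mapDomain_comp]
    abel

lemma cderW_eq (k : Fin m) (w : Word m) :
    cderW k w = Finsupp.mapDomain (fun q : Word m × Word m => q.2 ++ q.1) (derW k w) := by
  unfold cderW derW
  rw [Finsupp.mapDomain_finset_sum]
  refine Finset.sum_congr rfl fun i _ => ?_
  rw [apply_ite (Finsupp.mapDomain fun q : Word m × Word m => q.2 ++ q.1),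
    Finsupp.mapDomain_single, Finsupp.mapDomain_zero]

end aux2
section aux3
open Finsupp
variable {m : ℕ} {M : Type*} [AddCommMonoid M]

lemma sum_range_le (g : ℕ → M) {i n : ℕ} (h : i ≤ n) :
    ∑ t ∈ Finset.range i, g t = ∑ t ∈ Finset.range n, if t < i then g t else 0 := by
  rw [← Finset.sum_filter]
  congr 1
  ext t
  simp only [Finset.mem_filter, Finset.mem_range]
  omega

lemma sum_range_gt (g : ℕ → M) {t n : ℕ} :
    (∑ i ∈ Finset.range n, if t < i then g i else 0) = ∑ j ∈ Finset.range (n - 1 - t), g (t + 1 + j) := by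
  rw [← Finset.sum_filter]
  rw [show (Finset.range n).filter (fun i => t < i) = Finset.Ico (t + 1) n from by
    ext i; simp only [Finset.mem_filter, Finset.mem_range, Finset.mem_Ico]; omega]
  rw [Finset.sum_Ico_eq_sum_range]
  rw [show n - (t + 1) = n - 1 - t from by omega]

lemma triangle_exchange (g : ℕ → ℕ → M) (n : ℕ) :
    ∑ i ∈ Finset.range n, ∑ t ∈ Finset.range i, g i t
      = ∑ t ∈ Finset.range n, ∑ j ∈ Finset.range (n - 1 - t), g (t + 1 + j) t := by
  calc ∑ i ∈ Finset.range n, ∑ t ∈ Finset.range i, g i t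
      = ∑ i ∈ Finset.range n, ∑ t ∈ Finset.range n, if t < i then g i t else 0 := by
        refine Finset.sum_congr rfl fun i hi => ?_
        exact sum_range_le _ (le_of_lt (Finset.mem_range.mp hi))
    _ = ∑ t ∈ Finset.range n, ∑ i ∈ Finset.range n, if t < i then g i t else 0 := Finset.sum_comm
    _ = ∑ t ∈ Finset.range n, ∑ j ∈ Finset.range (n - 1 - t), g (t + 1 + j) t := by
        refine Finset.sum_congr rfl fun t _ => ?_
        exact sum_range_gt _

lemma xi_word (w v : Word m) :
    ∑ k : Fin m, sharp (derW k w) (cderW k v)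
      = ∑ i : Fin w.length,
          Finsupp.mapDomain (fun u => w.take i.1 ++ u ++ w.drop (i.1 + 1)) (cderW (w.get i) v) := by
  calc ∑ k : Fin m, sharp (derW k w) (cderW k v)
      = ∑ k : Fin m, ∑ i : Fin w.length,
          if w.get i = k then sharp (Finsupp.single (w.take i.1, w.drop (i.1 + 1)) 1) (cderW k v) else 0 := by
        refine Finset.sum_congr rfl fun k _ => ?_
        rw [derW, sharp_sum_left]
        exact Finset.sum_congr rfl fun i _ => sharp_ite_left _ _ _
    _ = ∑ i : Fin w.length, ∑ k : Fin m,
          if w.get i = k then sharp (Finsupp.single (w.take i.1, w.drop (i.1 + 1)) 1) (cderW k v) else 0 :=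
        Finset.sum_comm
    _ = _ := by
        refine Finset.sum_congr rfl fun i _ => ?_
        rw [Finset.sum_ite_eq Finset.univ (w.get i)
          (fun k => sharp (Finsupp.single (w.take i.1, w.drop (i.1 + 1)) 1) (cderW k v)),
          if_pos (Finset.mem_univ _), sharp_single_left, one_smul]

end aux3
section aux4
open Finsupp
variable {m : ℕ}

lemma sharp_single_right' (T : NCPoly₂ m) (x : Word m) (c : ℂ) :
    sharp T (Finsupp.single x c)
      = c • Finsupp.mapDomain (fun q : Word m × Word m => q.1 ++ x ++ q.2) T := by
  unfold sharp
  rw [Finsupp.mapDomain, Finsupp.smul_sum]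
  refine Finset.sum_congr rfl fun rs _ => ?_
  dsimp only
  rw [Finsupp.sum_single_index (by simp), Finsupp.smul_single', mul_comm]

lemma cderW_conj (l : Fin m) (r u s : Word m) :
    cderW l (r ++ u ++ s)
      = Finsupp.mapDomain (fun q : Word m × Word m => q.2 ++ (s ++ r) ++ q.1) (derW l u)
      + Finsupp.mapDomain (fun q : Word m × Word m => q.2 ++ (u ++ s) ++ q.1) (derW l r)
      + Finsupp.mapDomain (fun q : Word m × Word m => q.2 ++ (r ++ u) ++ q.1) (derW l s) := by
  rw [cderW_eq, derW_append l (r ++ u) s, derW_append l r u]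
  simp only [Finsupp.mapDomain_add, ← Finsupp.mapDomain_comp, Function.comp_def]
  simp only [List.append_assoc]
  abel

lemma cder_conj (l : Fin m) (r s : Word m) (Q : NCPoly m) :
    cder l (Finsupp.mapDomain (fun u => r ++ u ++ s) Q)
      = Finsupp.mapDomain (fun q : Word m × Word m => q.2 ++ (s ++ r) ++ q.1) (der l Q)
      + sharp (Finsupp.mapDomain Prod.swap (derW l r)) (Finsupp.mapDomain (· ++ s) Q)
      + sharp (Finsupp.mapDomain Prod.swap (derW l s)) (Finsupp.mapDomain (r ++ ·) Q) := by
  induction Q using Finsupp.induction_linear with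
  | zero => simp [sharp_zero_right]
  | add f g hf hg =>
      simp only [Finsupp.mapDomain_add, map_add, sharp_add_right, hf, hg]
      abel
  | single w c =>
      rw [Finsupp.mapDomain_single, Finsupp.mapDomain_single, Finsupp.mapDomain_single,
        cder_single, cderW_conj, der_single, Finsupp.mapDomain_smul,
        sharp_single_right', sharp_single_right',
        ← Finsupp.mapDomain_comp, ← Finsupp.mapDomain_comp]
      simp only [Function.comp_def, Prod.fst_swap, Prod.snd_swap]
      rw [smul_add, smul_add]

end aux4
section aux5
open Finsupp
variable {m : ℕ}

/-- Square-sum normal form for `∂_k D_l v` at positions `t` (the `l`) and `i` (the `k`). -/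
noncomputable def sqF (v : Word m) (k l : Fin m) (t i : ℕ) : NCPoly₂ m :=
  (if t < i ∧ v[t]? = Option.some l ∧ v[i]? = Option.some k then
    Finsupp.single ((v.take i).drop (t+1), v.drop (i+1) ++ v.take t) 1 else 0)
  + (if i < t ∧ v[t]? = Option.some l ∧ v[i]? = Option.some k then
    Finsupp.single (v.drop (t+1) ++ v.take i, (v.take t).drop (i+1)) 1 else 0)

lemma sqF_swap (v : Word m) (k l : Fin m) (t i : ℕ) :
    Finsupp.mapDomain Prod.swap (sqF v l k i t) = sqF v k l t i := by
  have hs : ∀ (c : Prop) (_ : Decidable c) (a b : Word m),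
      Finsupp.mapDomain (Prod.swap : Word m × Word m → Word m × Word m)
        (if c then Finsupp.single (a, b) (1:ℂ) else 0) = if c then Finsupp.single (b, a) (1:ℂ) else 0 := by
    intro c hc a b
    split <;> simp
  unfold sqF
  rw [Finsupp.mapDomain_add, hs, hs, add_comm]
  congr 1
  · exact if_congr (by tauto) rfl rfl
  · exact if_congr (by tauto) rfl rfl

lemma hessian_sq (v : Word m) (k l : Fin m) :
    der k (cderW l v)
      = ∑ t ∈ Finset.range v.length, ∑ i ∈ Finset.range v.length, sqF v k l t i := by
  classical
  have step1 : der k (cderW l v)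
      = ∑ t : Fin v.length, if v.get t = l
          then derW k (v.drop (t.1+1) ++ v.take t.1) else 0 := by
    rw [cderW, map_sum]
    refine Finset.sum_congr rfl fun t _ => ?_
    rw [apply_ite (der k), der_single, one_smul, map_zero]
  rw [step1]
  have key : ∀ t : Fin v.length,
      (if v.get t = l then derW k (v.drop (t.1+1) ++ v.take t.1) else 0)
        = ∑ i ∈ Finset.range v.length, sqF v k l t.1 i := by
    intro t
    by_cases ht : v.get t = l
    · rw [if_pos ht]
      have htp : v[t.1]? = Option.some l := by
        rw [List.getElem?_eq_getElem t.2, ← List.get_eq_getElem, ht]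
      have rhs : ∑ i ∈ Finset.range v.length, sqF v k l t.1 i
          = (∑ j ∈ Finset.range (v.length - 1 - t.1),
              if v[t.1+1+j]? = Option.some k then
                Finsupp.single ((v.take (t.1+1+j)).drop (t.1+1),
                  v.drop (t.1+1+j+1) ++ v.take t.1) 1 else 0)
          + (∑ i ∈ Finset.range t.1,
              if v[i]? = Option.some k then
                Finsupp.single (v.drop (t.1+1) ++ v.take i, (v.take t.1).drop (i+1)) 1 else 0) := by
        unfold sqF
        rw [Finset.sum_add_distrib]
        congr 1
        · rw [← sum_range_gt (fun i => if v[i]? = Option.some k then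
              Finsupp.single ((v.take i).drop (t.1+1), v.drop (i+1) ++ v.take t.1) 1 else 0)]
          refine Finset.sum_congr rfl fun i _ => ?_
          by_cases h1 : t.1 < i
          · simp [h1, htp, show v[t.1] = l from by simpa [List.get_eq_getElem] using ht]
          · simp [h1]
        · rw [sum_range_le (fun i => if v[i]? = Option.some k then
              Finsupp.single (v.drop (t.1+1) ++ v.take i, (v.take t.1).drop (i+1)) 1 else 0)
              (le_of_lt t.2)]
          refine Finset.sum_congr rfl fun i _ => ?_
          by_cases h1 : i < t.1
          · simp [h1, htp, show v[t.1] = l from by simpa [List.get_eq_getElem] using ht]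
          · simp [h1]
      rw [rhs, derW_append]
      congr 1
      · -- drop part
        have hlen : (v.drop (t.1+1)).length = v.length - 1 - t.1 := by
          rw [List.length_drop]; omega
        rw [derW, Finsupp.mapDomain_finset_sum]
        calc (∑ i : Fin (v.drop (t.1+1)).length,
                Finsupp.mapDomain (fun q : Word m × Word m => (q.1, q.2 ++ v.take t.1))
                  (if (v.drop (t.1+1)).get i = k then
                    Finsupp.single ((v.drop (t.1+1)).take i.1, (v.drop (t.1+1)).drop (i.1+1)) (1:ℂ) else 0))
            = ∑ i : Fin (v.drop (t.1+1)).length,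
                (fun j => if v[t.1+1+j]? = Option.some k then
                  Finsupp.single ((v.take (t.1+1+j)).drop (t.1+1),
                    v.drop (t.1+1+j+1) ++ v.take t.1) 1 else 0) i.1 := by
              refine Finset.sum_congr rfl fun i _ => ?_
              have hb : t.1+1+i.1 < v.length := by
                have h2 := i.2
                have h3 : (v.drop (t.1+1)).length = v.length - (t.1+1) := List.length_drop
                omega
              rw [apply_ite (Finsupp.mapDomain (fun q : Word m × Word m => (q.1, q.2 ++ v.take t.1))),
                Finsupp.mapDomain_single, Finsupp.mapDomain_zero]
              dsimp only
              have e1 : t.1+1+i.1 - (t.1+1) = i.1 := by omega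
              have e2 : t.1+1 + (i.1+1) = t.1+1+i.1+1 := by omega
              refine if_congr ?_ ?_ rfl
              · rw [List.get_eq_getElem, List.getElem_drop, List.getElem?_eq_getElem hb,
                  Option.some_inj]
              · simp only [List.drop_take, List.drop_drop, e1, e2]
          _ = _ := by
              rw [Fin.sum_univ_eq_sum_range (fun j => if v[t.1+1+j]? = Option.some k then
                  Finsupp.single ((v.take (t.1+1+j)).drop (t.1+1),
                    v.drop (t.1+1+j+1) ++ v.take t.1) 1 else 0) ((v.drop (t.1+1)).length), hlen]
      · -- take part
        have hlen2 : (v.take t.1).length = t.1 := by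
          rw [List.length_take]; exact inf_eq_left.mpr (le_of_lt t.2)
        rw [derW, Finsupp.mapDomain_finset_sum]
        calc (∑ i : Fin (v.take t.1).length,
                Finsupp.mapDomain (fun q : Word m × Word m => (v.drop (t.1+1) ++ q.1, q.2))
                  (if (v.take t.1).get i = k then
                    Finsupp.single ((v.take t.1).take i.1, (v.take t.1).drop (i.1+1)) (1:ℂ) else 0))
            = ∑ i : Fin (v.take t.1).length,
                (fun j => if v[j]? = Option.some k then
                  Finsupp.single (v.drop (t.1+1) ++ v.take j, (v.take t.1).drop (j+1)) 1 else 0) i.1 := by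
              refine Finset.sum_congr rfl fun i _ => ?_
              have hi : i.1 < t.1 :=
                lt_of_lt_of_le i.2 ((List.length_take).le.trans (min_le_left _ _))
              have hb : i.1 < v.length := lt_trans hi t.2
              rw [apply_ite (Finsupp.mapDomain (fun q : Word m × Word m => (v.drop (t.1+1) ++ q.1, q.2))),
                Finsupp.mapDomain_single, Finsupp.mapDomain_zero]
              dsimp only
              refine if_congr ?_ ?_ rfl
              · rw [List.get_eq_getElem, List.getElem_take, List.getElem?_eq_getElem hb,
                  Option.some_inj]
              · rw [List.take_take, min_eq_left (le_of_lt hi)]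
          _ = _ := by
              rw [Fin.sum_univ_eq_sum_range (fun j => if v[j]? = Option.some k then
                  Finsupp.single (v.drop (t.1+1) ++ v.take j, (v.take t.1).drop (j+1)) 1 else 0)
                  ((v.take t.1).length), hlen2]
    · rw [if_neg ht]
      symm
      refine Finset.sum_eq_zero fun i _ => ?_
      have ht' : ¬ v[t.1] = l := by simpa [List.get_eq_getElem] using ht
      unfold sqF
      simp [ht', List.getElem?_eq_getElem t.2]
  rw [Finset.sum_congr rfl fun t _ => key t]
  exact Fin.sum_univ_eq_sum_range (fun t => ∑ i ∈ Finset.range v.length, sqF v k l t i) v.length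

/-- Hessian symmetry of cyclic derivatives. -/
lemma hessian (v : Word m) (k l : Fin m) :
    der k (cderW l v) = Finsupp.mapDomain Prod.swap (der l (cderW k v)) := by
  rw [hessian_sq, hessian_sq, Finsupp.mapDomain_finset_sum]
  rw [Finset.sum_congr rfl fun t _ => Finsupp.mapDomain_finset_sum (f := Prod.swap)]
  rw [Finset.sum_comm]
  exact Finset.sum_congr rfl fun t _ => Finset.sum_congr rfl fun i _ => (sqF_swap v k l i t).symm

end aux5
section aux6
open Finsupp
variable {m : ℕ}

lemma sharp_sum_right {ι : Type*} (s : Finset ι) (T : NCPoly₂ m) (P : ι → NCPoly m) :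
    sharp T (∑ i ∈ s, P i) = ∑ i ∈ s, sharp T (P i) := by
  classical
  induction s using Finset.induction_on with
  | empty => simp [sharp_zero_right]
  | insert _ _ h ih => rw [Finset.sum_insert h, Finset.sum_insert h, sharp_add_right, ih]

lemma sharp_ite_right (c : Prop) [Decidable c] (T : NCPoly₂ m) (P : NCPoly m) :
    sharp T (if c then P else 0) = if c then sharp T P else 0 := by
  split <;> simp [sharp_zero_right]

lemma der_cderW (k l : Fin m) (w : Word m) :
    der k (cderW l w)
      = ∑ t : Fin w.length, if w.get t = l then derW k (w.drop (t.1+1) ++ w.take t.1) else 0 := by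
  rw [cderW, map_sum]
  refine Finset.sum_congr rfl fun t _ => ?_
  rw [apply_ite (der k), der_single, one_smul, map_zero]

lemma sharp_swap_single (T : NCPoly₂ m) (x : Word m) :
    sharp (Finsupp.mapDomain Prod.swap T) (Finsupp.single x (1:ℂ))
      = Finsupp.mapDomain (fun q : Word m × Word m => q.2 ++ x ++ q.1) T := by
  rw [sharp_single_right', one_smul, ← Finsupp.mapDomain_comp]
  rfl

/-- Collapse the `k`-sum against the letter at each position of `u`. -/
lemma sharp_map_derW_collapse (e : Word m × Word m → Word m × Word m) (u v : Word m) :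
    ∑ k : Fin m, sharp (Finsupp.mapDomain e (derW k u)) (cderW k v)
      = ∑ j : Fin u.length,
          sharp (Finsupp.single (e (u.take j.1, u.drop (j.1+1))) (1:ℂ)) (cderW (u.get j) v) := by
  classical
  have step : ∀ k : Fin m, sharp (Finsupp.mapDomain e (derW k u)) (cderW k v)
      = ∑ j : Fin u.length, if u.get j = k then
          sharp (Finsupp.single (e (u.take j.1, u.drop (j.1+1))) (1:ℂ)) (cderW k v) else 0 := by
    intro k
    rw [derW, Finsupp.mapDomain_finset_sum, sharp_sum_left]
    refine Finset.sum_congr rfl fun j _ => ?_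
    rw [apply_ite (Finsupp.mapDomain e), Finsupp.mapDomain_single, Finsupp.mapDomain_zero,
      sharp_ite_left]
  rw [Finset.sum_congr rfl fun k _ => step k, Finset.sum_comm]
  refine Finset.sum_congr rfl fun j _ => ?_
  rw [Finset.sum_ite_eq Finset.univ (u.get j)
    (fun k => sharp (Finsupp.single (e (u.take j.1, u.drop (j.1+1))) (1:ℂ)) (cderW k v)),
    if_pos (Finset.mem_univ _)]

lemma rhs2_eq (w v : Word m) (l : Fin m) :
    ∑ k : Fin m, sharp (der k (cderW l v)) (cderW k w)
      = ∑ i : Fin w.length,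
          sharp (der (w.get i) (cderW l v)) (Finsupp.single (w.drop (i.1+1) ++ w.take i.1) (1:ℂ)) := by
  classical
  have step : ∀ k : Fin m, sharp (der k (cderW l v)) (cderW k w)
      = ∑ i : Fin w.length, if w.get i = k then
          sharp (der k (cderW l v)) (Finsupp.single (w.drop (i.1+1) ++ w.take i.1) (1:ℂ)) else 0 := by
    intro k
    rw [show cderW k w = ∑ i : Fin w.length,
        (if w.get i = k then Finsupp.single (w.drop (i.1+1) ++ w.take i.1) (1:ℂ) else 0) from rfl,
      sharp_sum_right]
    exact Finset.sum_congr rfl fun i _ => sharp_ite_right _ _ _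
  rw [Finset.sum_congr rfl fun k _ => step k, Finset.sum_comm]
  refine Finset.sum_congr rfl fun i _ => ?_
  rw [Finset.sum_ite_eq Finset.univ (w.get i)
    (fun k => sharp (der k (cderW l v)) (Finsupp.single (w.drop (i.1+1) ++ w.take i.1) (1:ℂ))),
    if_pos (Finset.mem_univ _)]

lemma rhs1_eq (w v : Word m) (l : Fin m) :
    ∑ k : Fin m, sharp (der k (cderW l w)) (cderW k v)
      = ∑ t : Fin w.length, if w.get t = l then
          (∑ k : Fin m, sharp (derW k (w.drop (t.1+1) ++ w.take t.1)) (cderW k v)) else 0 := by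
  classical
  have step : ∀ k : Fin m, sharp (der k (cderW l w)) (cderW k v)
      = ∑ t : Fin w.length, if w.get t = l then
          sharp (derW k (w.drop (t.1+1) ++ w.take t.1)) (cderW k v) else 0 := by
    intro k
    rw [der_cderW, sharp_sum_left]
    exact Finset.sum_congr rfl fun t _ => sharp_ite_left _ _ _
  rw [Finset.sum_congr rfl fun k _ => step k, Finset.sum_comm]
  refine Finset.sum_congr rfl fun t _ => ?_
  by_cases ht : w.get t = l
  · simp [ht]
  · simp [ht]

end aux6
section aux7
open Finsupp
variable {m : ℕ}

noncomputable def gB (w v : Word m) (l : Fin m) (i t : ℕ) : NCPoly m :=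
  if w[t]? = Option.some l then
    Finsupp.mapDomain (fun x => (w.take i).drop (t+1) ++ (x ++ (w.drop (i+1) ++ w.take t)))
      (cderW (w.getD i l) v)
  else 0

noncomputable def gC (w v : Word m) (l : Fin m) (t i : ℕ) : NCPoly m :=
  if w[t]? = Option.some l then
    Finsupp.mapDomain (fun x => w.drop (t+1) ++ (w.take i ++ (x ++ (w.take t).drop (i+1))))
      (cderW (w.getD i l) v)
  else 0

lemma getD_getI (w : Word m) (l : Fin m) (i : Fin w.length) : w.get i = w.getD i.1 l := by
  rw [List.getD_eq_getElem w l i.2, List.get_eq_getElem]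

lemma Bsum (w v : Word m) (l : Fin m) (i : Fin w.length) :
    sharp (Finsupp.mapDomain Prod.swap (derW l (w.take i.1)))
        (Finsupp.mapDomain (· ++ w.drop (i.1+1)) (cderW (w.get i) v))
      = ∑ t ∈ Finset.range i.1, gB w v l i.1 t := by
  have hlen : (w.take i.1).length = i.1 := by
    rw [List.length_take]; exact inf_eq_left.mpr (le_of_lt i.2)
  rw [derW, Finsupp.mapDomain_finset_sum, sharp_sum_left]
  have per : ∀ t : Fin (w.take i.1).length,
      sharp (Finsupp.mapDomain Prod.swap
          (if (w.take i.1).get t = l then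
            Finsupp.single ((w.take i.1).take t.1, (w.take i.1).drop (t.1+1)) (1:ℂ) else 0))
        (Finsupp.mapDomain (· ++ w.drop (i.1+1)) (cderW (w.get i) v))
      = gB w v l i.1 t.1 := by
    intro t
    have hti : t.1 < i.1 := lt_of_lt_of_le t.2 ((List.length_take).le.trans (min_le_left _ _))
    have hb : t.1 < w.length := lt_trans hti i.2
    rw [apply_ite (Finsupp.mapDomain (Prod.swap : Word m × Word m → Word m × Word m)),
      Finsupp.mapDomain_single, Finsupp.mapDomain_zero, Prod.swap_prod_mk, sharp_ite_left,
      sharp_single_left, one_smul, ← Finsupp.mapDomain_comp]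
    unfold gB
    refine if_congr ?_ ?_ rfl
    · rw [List.get_eq_getElem, List.getElem_take, List.getElem?_eq_getElem hb, Option.some_inj]
    · rw [getD_getI w l i]
      congr 1
      funext x
      show ((w.take i.1).drop (t.1+1) ++ (x ++ w.drop (i.1+1))) ++ (w.take i.1).take t.1 = _
      rw [List.take_take, inf_eq_left.mpr (le_of_lt hti)]
      simp [List.append_assoc]
  rw [Finset.sum_congr rfl fun t _ => per t,
    Fin.sum_univ_eq_sum_range (fun t => gB w v l i.1 t) ((w.take i.1).length), hlen]

lemma Csum (w v : Word m) (l : Fin m) (i : Fin w.length) :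
    sharp (Finsupp.mapDomain Prod.swap (derW l (w.drop (i.1+1))))
        (Finsupp.mapDomain (w.take i.1 ++ ·) (cderW (w.get i) v))
      = ∑ j ∈ Finset.range (w.length - 1 - i.1), gC w v l (i.1+1+j) i.1 := by
  have hlen : (w.drop (i.1+1)).length = w.length - 1 - i.1 := by
    rw [List.length_drop]; omega
  rw [derW, Finsupp.mapDomain_finset_sum, sharp_sum_left]
  have per : ∀ j : Fin (w.drop (i.1+1)).length,
      sharp (Finsupp.mapDomain Prod.swap
          (if (w.drop (i.1+1)).get j = l then
            Finsupp.single ((w.drop (i.1+1)).take j.1, (w.drop (i.1+1)).drop (j.1+1)) (1:ℂ) else 0))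
        (Finsupp.mapDomain (w.take i.1 ++ ·) (cderW (w.get i) v))
      = gC w v l (i.1+1+j.1) i.1 := by
    intro j
    have hb : i.1+1+j.1 < w.length := by
      have h2 := j.2
      have h3 : (w.drop (i.1+1)).length = w.length - (i.1+1) := List.length_drop
      omega
    have e1 : i.1+1+j.1 - (i.1+1) = j.1 := by omega
    have e2 : i.1+1 + (j.1+1) = i.1+1+j.1+1 := by omega
    rw [apply_ite (Finsupp.mapDomain (Prod.swap : Word m × Word m → Word m × Word m)),
      Finsupp.mapDomain_single, Finsupp.mapDomain_zero, Prod.swap_prod_mk, sharp_ite_left,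
      sharp_single_left, one_smul, ← Finsupp.mapDomain_comp]
    unfold gC
    refine if_congr ?_ ?_ rfl
    · rw [List.get_eq_getElem, List.getElem_drop, List.getElem?_eq_getElem hb, Option.some_inj]
    · rw [getD_getI w l i]
      congr 1
      funext x
      show ((w.drop (i.1+1)).drop (j.1+1) ++ (w.take i.1 ++ x)) ++ (w.drop (i.1+1)).take j.1 = _
      rw [List.drop_take, e1, List.drop_drop, e2]
      simp [List.append_assoc]
  rw [Finset.sum_congr rfl fun j _ => per j,
    Fin.sum_univ_eq_sum_range (fun j => gC w v l (i.1+1+j) i.1) ((w.drop (i.1+1)).length), hlen]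

lemma Asum (w v : Word m) (l : Fin m) (i : Fin w.length) :
    sharp (der (w.get i) (cderW l v)) (Finsupp.single (w.drop (i.1+1) ++ w.take i.1) (1:ℂ))
      = Finsupp.mapDomain
          (fun q : Word m × Word m => q.2 ++ (w.drop (i.1+1) ++ w.take i.1) ++ q.1)
          (der l (cderW (w.get i) v)) := by
  rw [hessian v (w.get i) l, sharp_swap_single]

lemma rot_expand (w v : Word m) (l : Fin m) (t : Fin w.length) :
    (if w.get t = l then
        (∑ k : Fin m, sharp (derW k (w.drop (t.1+1) ++ w.take t.1)) (cderW k v)) else 0)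
      = (∑ j ∈ Finset.range (w.length - 1 - t.1), gB w v l (t.1+1+j) t.1)
        + ∑ i ∈ Finset.range t.1, gC w v l t.1 i := by
  by_cases ht : w.get t = l
  · rw [if_pos ht]
    have htp : w[t.1]? = Option.some l := by
      rw [List.getElem?_eq_getElem t.2, ← List.get_eq_getElem, ht]
    have hlen : (w.drop (t.1+1)).length = w.length - 1 - t.1 := by
      rw [List.length_drop]; omega
    have hlen2 : (w.take t.1).length = t.1 := by
      rw [List.length_take]; exact inf_eq_left.mpr (le_of_lt t.2)
    rw [Finset.sum_congr rfl fun k _ => by rw [derW_append, sharp_add_left],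
      Finset.sum_add_distrib]
    congr 1
    · -- drop part → gB
      rw [sharp_map_derW_collapse (fun q : Word m × Word m => (q.1, q.2 ++ w.take t.1))
        (w.drop (t.1+1)) v]
      have per : ∀ j : Fin (w.drop (t.1+1)).length,
          sharp (Finsupp.single
              ((fun q : Word m × Word m => (q.1, q.2 ++ w.take t.1))
                ((w.drop (t.1+1)).take j.1, (w.drop (t.1+1)).drop (j.1+1))) (1:ℂ))
            (cderW ((w.drop (t.1+1)).get j) v)
          = gB w v l (t.1+1+j.1) t.1 := by
        intro j
        have hb : t.1+1+j.1 < w.length := by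
          have h2 := j.2
          have h3 : (w.drop (t.1+1)).length = w.length - (t.1+1) := List.length_drop
          omega
        have e1 : t.1+1+j.1 - (t.1+1) = j.1 := by omega
        have e2 : t.1+1 + (j.1+1) = t.1+1+j.1+1 := by omega
        dsimp only
        rw [sharp_single_left, one_smul]
        unfold gB
        rw [if_pos htp]
        rw [show (w.drop (t.1+1)).get j = w.getD (t.1+1+j.1) l from by
          rw [List.get_eq_getElem, List.getElem_drop, List.getD_eq_getElem w l hb]]
        congr 1
        funext x
        show ((w.drop (t.1+1)).take j.1 ++ x) ++ ((w.drop (t.1+1)).drop (j.1+1) ++ w.take t.1) = _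
        rw [List.drop_take, e1, List.drop_drop, e2]
        simp [List.append_assoc]
      rw [Finset.sum_congr rfl fun j _ => per j,
        Fin.sum_univ_eq_sum_range (fun j => gB w v l (t.1+1+j) t.1) ((w.drop (t.1+1)).length), hlen]
    · -- take part → gC
      rw [sharp_map_derW_collapse (fun q : Word m × Word m => (w.drop (t.1+1) ++ q.1, q.2))
        (w.take t.1) v]
      have per : ∀ i : Fin (w.take t.1).length,
          sharp (Finsupp.single
              ((fun q : Word m × Word m => (w.drop (t.1+1) ++ q.1, q.2))
                ((w.take t.1).take i.1, (w.take t.1).drop (i.1+1))) (1:ℂ))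
            (cderW ((w.take t.1).get i) v)
          = gC w v l t.1 i.1 := by
        intro i
        have hit : i.1 < t.1 := lt_of_lt_of_le i.2 ((List.length_take).le.trans (min_le_left _ _))
        have hb : i.1 < w.length := lt_trans hit t.2
        dsimp only
        rw [sharp_single_left, one_smul]
        unfold gC
        rw [if_pos htp]
        rw [show (w.take t.1).get i = w.getD i.1 l from by
          rw [List.get_eq_getElem, List.getElem_take, List.getD_eq_getElem w l hb]]
        congr 1
        funext x
        show ((w.drop (t.1+1) ++ (w.take t.1).take i.1) ++ x) ++ (w.take t.1).drop (i.1+1) = _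
        rw [List.take_take, inf_eq_left.mpr (le_of_lt hit)]
        simp [List.append_assoc]
      rw [Finset.sum_congr rfl fun i _ => per i,
        Fin.sum_univ_eq_sum_range (fun i => gC w v l t.1 i) ((w.take t.1).length), hlen2]
  · rw [if_neg ht]
    have ht' : ¬ w[t.1]? = Option.some l := by
      intro h
      rw [List.getElem?_eq_getElem t.2, Option.some_inj] at h
      exact ht (by rw [List.get_eq_getElem]; exact h)
    symm
    rw [Finset.sum_eq_zero fun j _ => by unfold gB; rw [if_neg ht'],
      Finset.sum_eq_zero fun i _ => by unfold gC; rw [if_neg ht'], add_zero]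

end aux7
section aux8
open Finsupp
variable {m : ℕ}

lemma core_word (w v : Word m) (l : Fin m) :
    cder l (∑ k : Fin m, sharp (derW k w) (cderW k v))
      = (∑ k : Fin m, sharp (der k (cderW l w)) (cderW k v))
        + ∑ k : Fin m, sharp (der k (cderW l v)) (cderW k w) := by
  classical
  have main : cder l (∑ k : Fin m, sharp (derW k w) (cderW k v))
      = ((∑ i : Fin w.length,
            Finsupp.mapDomain
              (fun q : Word m × Word m => q.2 ++ (w.drop (i.1+1) ++ w.take i.1) ++ q.1)
              (der l (cderW (w.get i) v)))
        + ∑ i : Fin w.length,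
            sharp (Finsupp.mapDomain Prod.swap (derW l (w.take i.1)))
              (Finsupp.mapDomain (· ++ w.drop (i.1+1)) (cderW (w.get i) v)))
        + ∑ i : Fin w.length,
            sharp (Finsupp.mapDomain Prod.swap (derW l (w.drop (i.1+1))))
              (Finsupp.mapDomain (w.take i.1 ++ ·) (cderW (w.get i) v)) := by
    rw [xi_word, map_sum, ← Finset.sum_add_distrib, ← Finset.sum_add_distrib]
    exact Finset.sum_congr rfl fun i _ =>
      cder_conj l (w.take i.1) (w.drop (i.1+1)) (cderW (w.get i) v)
  have hA : ∑ k : Fin m, sharp (der k (cderW l v)) (cderW k w)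
      = ∑ i : Fin w.length,
          Finsupp.mapDomain
            (fun q : Word m × Word m => q.2 ++ (w.drop (i.1+1) ++ w.take i.1) ++ q.1)
            (der l (cderW (w.get i) v)) := by
    rw [rhs2_eq w v l]
    exact Finset.sum_congr rfl fun i _ => Asum w v l i
  have hB : ∑ i : Fin w.length,
        sharp (Finsupp.mapDomain Prod.swap (derW l (w.take i.1)))
          (Finsupp.mapDomain (· ++ w.drop (i.1+1)) (cderW (w.get i) v))
      = ∑ t ∈ Finset.range w.length,
          ∑ j ∈ Finset.range (w.length - 1 - t), gB w v l (t+1+j) t := by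
    rw [Finset.sum_congr rfl fun i _ => Bsum w v l i,
      Fin.sum_univ_eq_sum_range (fun i => ∑ t ∈ Finset.range i, gB w v l i t) w.length,
      triangle_exchange (fun i t => gB w v l i t) w.length]
  have hC : ∑ i : Fin w.length,
        sharp (Finsupp.mapDomain Prod.swap (derW l (w.drop (i.1+1))))
          (Finsupp.mapDomain (w.take i.1 ++ ·) (cderW (w.get i) v))
      = ∑ t ∈ Finset.range w.length, ∑ i ∈ Finset.range t, gC w v l t i := by
    rw [Finset.sum_congr rfl fun i _ => Csum w v l i,
      Fin.sum_univ_eq_sum_range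
        (fun i => ∑ j ∈ Finset.range (w.length - 1 - i), gC w v l (i+1+j) i) w.length,
      ← triangle_exchange (fun t i => gC w v l t i) w.length]
  have hR1 : ∑ k : Fin m, sharp (der k (cderW l w)) (cderW k v)
      = (∑ t ∈ Finset.range w.length,
          ∑ j ∈ Finset.range (w.length - 1 - t), gB w v l (t+1+j) t)
        + ∑ t ∈ Finset.range w.length, ∑ i ∈ Finset.range t, gC w v l t i := by
    rw [rhs1_eq w v l, Finset.sum_congr rfl fun t _ => rot_expand w v l t,
      Finset.sum_add_distrib,
      Fin.sum_univ_eq_sum_range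
        (fun t => ∑ j ∈ Finset.range (w.length - 1 - t), gB w v l (t+1+j) t) w.length,
      Fin.sum_univ_eq_sum_range (fun t => ∑ i ∈ Finset.range t, gC w v l t i) w.length]
  rw [main, hB, hC, hR1, hA]
  abel

end aux8

section aux9
open Finsupp
variable {m : ℕ}

lemma Xi1bar_zero (V : NCPoly m) : Xi1bar V 0 = 0 := by
  unfold Xi1bar
  refine Finset.sum_eq_zero fun k _ => ?_
  rw [map_zero, sharp_zero_left]

lemma Xi1bar_add (V f g : NCPoly m) : Xi1bar V (f + g) = Xi1bar V f + Xi1bar V g := by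
  unfold Xi1bar
  rw [← Finset.sum_add_distrib]
  exact Finset.sum_congr rfl fun k _ => by rw [map_add, sharp_add_left]

lemma Xi1bar_smul (V : NCPoly m) (c : ℂ) (f : NCPoly m) :
    Xi1bar V (c • f) = c • Xi1bar V f := by
  unfold Xi1bar
  rw [Finset.smul_sum]
  exact Finset.sum_congr rfl fun k _ => by rw [map_smul, sharp_smul_left]

lemma key (V Q : NCPoly m) (l : Fin m) :
    cder l (Xi1bar V Q)
      = Xi1bar V (cder l Q) + ∑ i : Fin m, sharp (der i (cder l V)) (cder i Q) := by
  induction Q using Finsupp.induction_linear with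
  | zero => simp [Xi1bar_zero, map_zero, sharp_zero_right]
  | add f g hf hg =>
      have d3 : (∑ i : Fin m, sharp (der i (cder l V)) (cder i (f + g)))
          = (∑ i : Fin m, sharp (der i (cder l V)) (cder i f))
            + ∑ i : Fin m, sharp (der i (cder l V)) (cder i g) := by
        rw [← Finset.sum_add_distrib]
        exact Finset.sum_congr rfl fun i _ => by rw [map_add, sharp_add_right]
      rw [Xi1bar_add, map_add, hf, hg, map_add, Xi1bar_add, d3]
      abel
  | single w c =>
      have hword : ∀ (W : NCPoly m), cder l (∑ k : Fin m, sharp (derW k w) (cder k W))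
          = (∑ k : Fin m, sharp (der k (cderW l w)) (cder k W))
            + ∑ i : Fin m, sharp (der i (cder l W)) (cderW i w) := by
        intro W
        induction W using Finsupp.induction_linear with
        | zero => simp [map_zero, sharp_zero_right, sharp_zero_left]
        | add f g hf hg =>
            have d1 : (∑ k : Fin m, sharp (derW k w) (cder k (f + g)))
                = (∑ k : Fin m, sharp (derW k w) (cder k f))
                  + ∑ k : Fin m, sharp (derW k w) (cder k g) := by
              rw [← Finset.sum_add_distrib]
              exact Finset.sum_congr rfl fun k _ => by rw [map_add, sharp_add_right]
            have d2 : (∑ k : Fin m, sharp (der k (cderW l w)) (cder k (f + g)))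
                = (∑ k : Fin m, sharp (der k (cderW l w)) (cder k f))
                  + ∑ k : Fin m, sharp (der k (cderW l w)) (cder k g) := by
              rw [← Finset.sum_add_distrib]
              exact Finset.sum_congr rfl fun k _ => by rw [map_add, sharp_add_right]
            have d3 : (∑ i : Fin m, sharp (der i (cder l (f + g))) (cderW i w))
                = (∑ i : Fin m, sharp (der i (cder l f)) (cderW i w))
                  + ∑ i : Fin m, sharp (der i (cder l g)) (cderW i w) := by
              rw [← Finset.sum_add_distrib]
              exact Finset.sum_congr rfl fun i _ => by rw [map_add, map_add, sharp_add_left]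
            rw [d1, map_add, hf, hg, d2, d3]
            abel
        | single v c' =>
            have s1 : (∑ k : Fin m, sharp (derW k w) (cder k (Finsupp.single v c')))
                = c' • ∑ k : Fin m, sharp (derW k w) (cderW k v) := by
              rw [Finset.smul_sum]
              exact Finset.sum_congr rfl fun k _ => by rw [cder_single, sharp_smul_right]
            have s2 : (∑ k : Fin m, sharp (der k (cderW l w)) (cder k (Finsupp.single v c')))
                = c' • ∑ k : Fin m, sharp (der k (cderW l w)) (cderW k v) := by
              rw [Finset.smul_sum]
              exact Finset.sum_congr rfl fun k _ => by rw [cder_single, sharp_smul_right]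
            have s3 : (∑ i : Fin m, sharp (der i ((c' : ℂ) • cderW l v)) (cderW i w))
                = c' • ∑ i : Fin m, sharp (der i (cderW l v)) (cderW i w) := by
              rw [Finset.smul_sum]
              exact Finset.sum_congr rfl fun i _ => by rw [map_smul, sharp_smul_left]
            rw [cder_single l v c', s1, s2, s3, map_smul, core_word w v l, smul_add]
      have e1 : Xi1bar V (Finsupp.single w c)
          = c • ∑ k : Fin m, sharp (derW k w) (cder k V) := by
        unfold Xi1bar
        rw [Finset.smul_sum]
        exact Finset.sum_congr rfl fun k _ => by rw [der_single, sharp_smul_left]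
      have e3 : (∑ i : Fin m, sharp (der i (cder l V)) (cder i (Finsupp.single w c)))
          = c • ∑ i : Fin m, sharp (der i (cder l V)) (cderW i w) := by
        rw [Finset.smul_sum]
        exact Finset.sum_congr rfl fun i _ => by rw [cder_single, sharp_smul_right]
      rw [e1, map_smul, hword V, e3, cder_single, Xi1bar_smul]
      unfold Xi1bar
      rw [smul_add]

end aux9


/-- for any potential `V` and any `P ∈ ℂ₀⟨X_1,…,X_m⟩`,
`D_l Ξ̄₁(Σ P) = Ξ̄₁(D_l Σ P) + Σ_{i=1}^m ∂_i D_l V ♯ D_i Σ P`. -/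
theorem cder_Xi1bar (m : ℕ) (V : NCPoly m) (P : NCPoly m) (hP : P [] = 0) (l : Fin m) :
    cder l (Xi1bar V (sig P)) =
      Xi1bar V (cder l (sig P)) +
        ∑ i : Fin m, sharp (der i (cder l V)) (cder i (sig P)) := by
  exact key V (sig P) l
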